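/- Let k ≥ 2, n = 2k, and r ≥ 1. The monomial f_3 = (x_1 x_2 ⋯ x_{2k})^r belongs to I_{B_{2k}}^{(2r(k−1))}; in particular, since deg(f_3) = 2rk = α_{2k, 2r(k−1)}, when s = 2r is even f_3 is a generator of minimal degree of I_{B_{2k}}^{(s(k−1))} distinct from (x_1 x_3 ⋯ x_{2k−1})^s and (x_2 x_4 ⋯ x_{2k})^s. -/

import Mathlib

open MvPolynomial

open Fin.NatCast in
/-- The subtree (arc) of `n-2` consecutive cycle vertices of the `n`-cycle `Q_n`
(on vertices `1,…,n` inside `Fin (n+2)`), starting at vertex `i+1`, for `i = 0,…,n-1`.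
The family `arcT n i`, `i < n`, is exactly the family `𝒯` of subtrees of `Q_n`
with `n-2` vertices. -/
def arcT (n i : ℕ) : Finset (Fin (n + 2)) :=
  (Finset.range (n - 2)).image fun t => (((i + t) % n + 1 : ℕ) : Fin (n + 2))

/-- The monomial prime ideal `⟨x_v⟩ + ⟨x_j : j ∈ S⟩`. -/
noncomputable def apexIdeal (K : Type*) [Field K] (n : ℕ) (v : Fin (n + 2))
    (S : Finset (Fin (n + 2))) : Ideal (MvPolynomial (Fin (n + 2)) K) :=
  Ideal.span (insert (X v) (X '' (S : Set (Fin (n+2))) : Set (MvPolynomial (Fin (n + 2)) K)))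

open Fin.NatCast in
/-- The `m`-th symbolic power `I_{B_n}^{(m)} = ⋂_{S ∈ 𝒯} (I_{[0,S]}^m ∩ I_{[n+1,S]}^m)`. -/
noncomputable def symbPow (K : Type*) [Field K] (n m : ℕ) : Ideal (MvPolynomial (Fin (n + 2)) K) :=
  ⨅ i ∈ Finset.range n,
    apexIdeal K n 0 (arcT n i) ^ m ⊓ apexIdeal K n ((n + 1 : ℕ) : Fin (n + 2)) (arcT n i) ^ m

/-- The monomial `x_0^{a_0} x_1^{a_1} ⋯ x_{n+1}^{a_{n+1}}`. -/
noncomputable def monom (K : Type*) [Field K] (n : ℕ) (a : Fin (n + 2) → ℕ) :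
    MvPolynomial (Fin (n + 2)) K :=
  ∏ i, X i ^ a i

/-- `α_{n,m}`: the least total degree of a monomial lying in `I_{B_n}^{(m)}`. -/
noncomputable def alphaSymb (K : Type*) [Field K] (n m : ℕ) : ℕ :=
  sInf {d | ∃ a : Fin (n + 2) → ℕ, (∑ i, a i) = d ∧ monom K n a ∈ symbPow K n m}

open Fin.NatCast in
/-- The Stanley–Reisner ideal `I_{B_n}` of the bipyramid `B_n`, presented by its
quadratic generators: `x_0 x_{n+1}` together with `x_i x_j` for non-adjacent
vertices `i, j` of the cycle `Q_n`. -/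
noncomputable def bipyrIdeal (K : Type*) [Field K] (n : ℕ) : Ideal (MvPolynomial (Fin (n + 2)) K) :=
  Ideal.span ({X (0 : Fin (n + 2)) * X ((n + 1 : ℕ) : Fin (n + 2))} ∪
    {p | ∃ i j : ℕ, 1 ≤ i ∧ i ≤ n ∧ 1 ≤ j ∧ j ≤ n ∧ i ≠ j ∧
      j ≠ i % n + 1 ∧ i ≠ j % n + 1 ∧
      p = X ((i : ℕ) : Fin (n + 2)) * X ((j : ℕ) : Fin (n + 2))})

open Fin.NatCast

/-! ### Auxiliary lemmas -/

lemma mem_span_pow_of_le {K : Type*} [Field K] {N : ℕ} (T : Finset (Fin N)) (m : ℕ) :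
    ∀ (a : Fin N → ℕ), m ≤ ∑ j ∈ T, a j →
    (∏ i, X i ^ a i : MvPolynomial (Fin N) K) ∈
      (Ideal.span (X '' (T : Set (Fin N)))) ^ m := by
  induction m with
  | zero => intro a _; simp
  | succ m ih =>
    intro a h
    obtain ⟨j, hjT, hj⟩ : ∃ j ∈ T, 0 < a j := by
      by_contra hc
      push_neg at hc
      have : ∑ j ∈ T, a j = 0 := Finset.sum_eq_zero fun j hj => Nat.le_zero.mp (hc j hj)
      omega
    set a' : Fin N → ℕ := Function.update a j (a j - 1) with ha'
    have key : (∏ i, X i ^ a i : MvPolynomial (Fin N) K) = (∏ i, X i ^ a' i) * X j := by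
      rw [Finset.prod_eq_mul_prod_sdiff_singleton_of_mem (Finset.mem_univ j)
          (fun i => (X i : MvPolynomial (Fin N) K) ^ a i),
        Finset.prod_eq_mul_prod_sdiff_singleton_of_mem (Finset.mem_univ j)
          (fun i => (X i : MvPolynomial (Fin N) K) ^ a' i)]
      have h1 : ∀ i ∈ Finset.univ \ {j}, (X i : MvPolynomial (Fin N) K) ^ a' i = X i ^ a i := by
        intro i hi
        rw [Finset.mem_sdiff, Finset.mem_singleton] at hi
        rw [ha', Function.update_of_ne hi.2]
      have haj : (X j : MvPolynomial (Fin N) K) ^ a j = X j ^ (a j - 1) * X j := by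
        rw [← pow_succ]; congr 1; omega
      rw [Finset.prod_congr rfl h1, ha', Function.update_self, haj]
      ring
    rw [key, pow_succ]
    refine Ideal.mul_mem_mul (ih a' ?_) (Ideal.subset_span ⟨j, hjT, rfl⟩)
    have : ∑ i ∈ T, a' i = (∑ i ∈ T, a i) - 1 := by
      rw [ha', Finset.sum_update_of_mem hjT,
        Finset.sum_eq_add_sum_sdiff_singleton_of_mem hjT a]
      omega
    omega

lemma le_sum_of_mem_span_pow {K : Type*} [Field K] {N : ℕ} (T : Finset (Fin N)) (m : ℕ)
    (a : Fin N → ℕ)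
    (h : (∏ i, X i ^ a i : MvPolynomial (Fin N) K) ∈
      (Ideal.span (X '' (T : Set (Fin N)))) ^ m) :
    m ≤ ∑ j ∈ T, a j := by
  set φ : MvPolynomial (Fin N) K →+* Polynomial K :=
    (aeval (fun i => if i ∈ T then Polynomial.X else 1) :
      MvPolynomial (Fin N) K →ₐ[K] Polynomial K).toRingHom with hφ
  have hmap : Ideal.map φ ((Ideal.span (X '' (T : Set (Fin N)))) ^ m)
      ≤ Ideal.span {Polynomial.X ^ m} := by
    rw [Ideal.map_pow, ← Ideal.span_singleton_pow]
    refine Ideal.pow_right_mono ?_ m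
    rw [Ideal.map_span, Ideal.span_le]
    rintro p ⟨q, ⟨i, hi, rfl⟩, rfl⟩
    have : φ (X i) = Polynomial.X := by
      simp [hφ, aeval_X, if_pos (by exact_mod_cast hi : i ∈ T)]
    rw [this]
    exact Ideal.subset_span rfl
  have hx : φ (∏ i, X i ^ a i) ∈ Ideal.span {Polynomial.X ^ m} :=
    hmap (Ideal.mem_map_of_mem φ h)
  have hval : φ (∏ i, X i ^ a i) = Polynomial.X ^ (∑ j ∈ T, a j) := by
    rw [map_prod]
    have : ∀ i : Fin N, φ (X i ^ a i)
        = if i ∈ T then Polynomial.X ^ a i else 1 := by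
      intro i
      rw [map_pow]
      simp only [hφ, AlgHom.toRingHom_eq_coe, RingHom.coe_coe, aeval_X]
      split <;> simp
    rw [Finset.prod_congr rfl (fun i _ => this i),
      ← Finset.prod_subset (Finset.subset_univ T) (fun x _ hx => by rw [if_neg hx]),
      Finset.prod_congr rfl (fun i hi => if_pos hi),
      Finset.prod_pow_eq_pow_sum]
  rw [hval, Ideal.mem_span_singleton] at hx
  exact (pow_dvd_pow_iff Polynomial.X_ne_zero Polynomial.not_isUnit_X).mp hx

lemma sum_range_rot (n : ℕ) (g : ℕ → ℕ) :
    ∀ t, ∑ i ∈ Finset.range n, g ((i + t) % n) = ∑ i ∈ Finset.range n, g (i % n) := by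
  intro t
  induction t with
  | zero => simp
  | succ t ih =>
    set h : ℕ → ℕ := fun j => g ((j % n + t) % n) with hh
    have e1 : ∀ i, g ((i + (t + 1)) % n) = h (i + 1) := by
      intro i
      rw [show i + (t + 1) = (i + 1) + t from by omega]
      simp only [hh, Nat.mod_add_mod]
    have e0 : ∀ i, g ((i + t) % n) = h i := by
      intro i; simp only [hh, Nat.mod_add_mod]
    have hn0 : h n = h 0 := by simp [hh, Nat.mod_self]
    have e2 : ∑ i ∈ Finset.range n, h (i + 1) = ∑ i ∈ Finset.range n, h i := by
      have s1 := Finset.sum_range_succ' h n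
      have s2 := Finset.sum_range_succ h n
      omega
    calc ∑ i ∈ Finset.range n, g ((i + (t + 1)) % n)
        = ∑ i ∈ Finset.range n, h (i + 1) := Finset.sum_congr rfl fun i _ => e1 i
      _ = ∑ i ∈ Finset.range n, h i := e2
      _ = ∑ i ∈ Finset.range n, g ((i + t) % n) := (Finset.sum_congr rfl fun i _ => e0 i).symm
      _ = ∑ i ∈ Finset.range n, g (i % n) := ih

lemma sum_arcT {n : ℕ} (hn : 3 ≤ n) (i : ℕ) (a : Fin (n + 2) → ℕ) :
    ∑ j ∈ arcT n i, a j
      = ∑ t ∈ Finset.range (n - 2), a (((i + t) % n + 1 : ℕ) : Fin (n + 2)) := by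
  refine Finset.sum_image ?_
  intro t1 h1 t2 h2 heq
  rw [Finset.mem_coe, Finset.mem_range] at h1 h2
  have hv1 : (i + t1) % n + 1 < n + 2 := by
    have := Nat.mod_lt (i + t1) (show 0 < n by omega); omega
  have hv2 : (i + t2) % n + 1 < n + 2 := by
    have := Nat.mod_lt (i + t2) (show 0 < n by omega); omega
  have : (i + t1) % n + 1 = (i + t2) % n + 1 := by
    have := congrArg (Fin.val) heq
    rwa [Fin.val_cast_of_lt hv1, Fin.val_cast_of_lt hv2] at this
  have hmod : (i + t1) % n = (i + t2) % n := by omega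
  have ht1 : t1 % n = t1 := Nat.mod_eq_of_lt (by omega)
  have ht2 : t2 % n = t2 := Nat.mod_eq_of_lt (by omega)
  have hme : t1 ≡ t2 [MOD n] := (Nat.ModEq.add_left_cancel' i hmod)
  have : t1 % n = t2 % n := hme
  omega

lemma zero_not_mem_arcT {n : ℕ} (hn : 3 ≤ n) (i : ℕ) : (0 : Fin (n + 2)) ∉ arcT n i := by
  simp only [arcT, Finset.mem_image, Finset.mem_range]
  rintro ⟨t, ht, heq⟩
  have hv : (i + t) % n + 1 < n + 2 := by
    have := Nat.mod_lt (i + t) (show 0 < n by omega); omega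
  have := congrArg Fin.val heq
  rw [Fin.val_cast_of_lt hv] at this
  simp at this

lemma last_not_mem_arcT {n : ℕ} (hn : 3 ≤ n) (i : ℕ) :
    (((n + 1 : ℕ)) : Fin (n + 2)) ∉ arcT n i := by
  simp only [arcT, Finset.mem_image, Finset.mem_range]
  rintro ⟨t, ht, heq⟩
  have hv : (i + t) % n + 1 < n + 2 := by
    have := Nat.mod_lt (i + t) (show 0 < n by omega); omega
  have hm := Nat.mod_lt (i + t) (show 0 < n by omega)
  have := congrArg Fin.val heq
  rw [Fin.val_cast_of_lt hv, Fin.val_cast_of_lt (by omega : n + 1 < n + 2)] at this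
  omega

lemma mem_apexIdeal_pow_iff {K : Type*} [Field K] {n : ℕ} (v : Fin (n + 2))
    (S : Finset (Fin (n + 2))) (hv : v ∉ S) (m : ℕ) (a : Fin (n + 2) → ℕ) :
    monom K n a ∈ apexIdeal K n v S ^ m ↔ m ≤ a v + ∑ j ∈ S, a j := by
  have he : apexIdeal K n v S
      = Ideal.span (X '' ((insert v S : Finset (Fin (n + 2))) : Set (Fin (n + 2)))) := by
    rw [apexIdeal, Finset.coe_insert, Set.image_insert_eq]
  rw [monom, he, show a v + ∑ j ∈ S, a j = ∑ j ∈ insert v S, a j from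
    (Finset.sum_insert hv).symm]
  exact ⟨le_sum_of_mem_span_pow _ m a, mem_span_pow_of_le _ m a⟩

lemma mem_symbPow_iff {K : Type*} [Field K] {n : ℕ} (hn : 3 ≤ n) (m : ℕ)
    (a : Fin (n + 2) → ℕ) :
    monom K n a ∈ symbPow K n m ↔ ∀ i < n,
      (m ≤ a 0 + ∑ t ∈ Finset.range (n - 2), a (((i + t) % n + 1 : ℕ) : Fin (n + 2))) ∧
      (m ≤ a (((n + 1 : ℕ)) : Fin (n + 2))
        + ∑ t ∈ Finset.range (n - 2), a (((i + t) % n + 1 : ℕ) : Fin (n + 2))) := by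
  simp only [symbPow, Submodule.mem_iInf, Submodule.mem_inf, Finset.mem_range]
  refine forall_congr' fun i => forall_congr' fun hi => ?_
  rw [mem_apexIdeal_pow_iff _ _ (zero_not_mem_arcT hn i) m a,
    mem_apexIdeal_pow_iff _ _ (last_not_mem_arcT hn i) m a, sum_arcT hn i a]

lemma monom_exponent_eq {K : Type*} [Field K] {n : ℕ} (a b : Fin (n + 2) → ℕ)
    (h : monom K n a = monom K n b) (v : Fin (n + 2)) : a v = b v := by
  set ψ : MvPolynomial (Fin (n + 2)) K →ₐ[K] Polynomial K :=
    aeval (fun i => if i = v then Polynomial.X else 1) with hψ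
  have key : ∀ c : Fin (n + 2) → ℕ, ψ (monom K n c) = Polynomial.X ^ c v := by
    intro c
    rw [monom, map_prod]
    have : ∀ i : Fin (n + 2), ψ (X i ^ c i)
        = if i = v then Polynomial.X ^ c i else 1 := by
      intro i
      rw [map_pow, hψ, aeval_X]
      split <;> simp
    rw [Finset.prod_congr rfl (fun i _ => this i), Finset.prod_ite_eq' Finset.univ v
      (fun i => Polynomial.X ^ c i), if_pos (Finset.mem_univ v)]
  have := congrArg ψ h
  rw [key a, key b] at this
  have := congrArg Polynomial.natDegree this
  rwa [Polynomial.natDegree_X_pow, Polynomial.natDegree_X_pow] at this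

/-- For `k ≥ 2`, `n = 2k` and `r ≥ 1`, the monomial `f₃ = (x_1 x_2 ⋯ x_{2k})^r` lies in
`I_{B_{2k}}^{(2r(k-1))}`; its degree is `2rk = α_{2k, 2r(k-1)}`, so for even `s = 2r` it
is a minimal-degree generator of `I_{B_{2k}}^{(s(k-1))}` distinct from
`(x_1 x_3 ⋯ x_{2k-1})^s` and `(x_2 x_4 ⋯ x_{2k})^s`. -/
theorem even_case_third_minimal_generator (K : Type*) [Field K] (k r : ℕ)
    (hk : 2 ≤ k) (hr : 1 ≤ r) :
    (monom K (2 * k) (fun j => if 1 ≤ (j : ℕ) ∧ (j : ℕ) ≤ 2 * k then r else 0)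
        ∈ symbPow K (2 * k) (2 * r * (k - 1))) ∧
    (∑ i : Fin (2 * k + 2), (if 1 ≤ (i : ℕ) ∧ (i : ℕ) ≤ 2 * k then r else 0)) = 2 * r * k ∧
    alphaSymb K (2 * k) (2 * r * (k - 1)) = 2 * r * k ∧
    monom K (2 * k) (fun j => if 1 ≤ (j : ℕ) ∧ (j : ℕ) ≤ 2 * k then r else 0) ≠
      monom K (2 * k) (fun j => if (j : ℕ) % 2 = 1 ∧ (j : ℕ) ≤ 2 * k then 2 * r else 0) ∧
    monom K (2 * k) (fun j => if 1 ≤ (j : ℕ) ∧ (j : ℕ) ≤ 2 * k then r else 0) ≠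
      monom K (2 * k)
        (fun j => if (j : ℕ) % 2 = 0 ∧ 1 ≤ (j : ℕ) ∧ (j : ℕ) ≤ 2 * k then 2 * r else 0) := by
  obtain ⟨k', rfl⟩ : ∃ k', k = k' + 1 := ⟨k - 1, by omega⟩
  have hk' : 1 ≤ k' := by omega
  set n : ℕ := 2 * (k' + 1) with hn
  have hn3 : 3 ≤ n := by omega
  set m : ℕ := 2 * r * (k' + 1 - 1) with hm
  have hm' : m = 2 * r * k' := by simp [hm]
  set a3 : Fin (n + 2) → ℕ :=
    fun j => if 1 ≤ (j : ℕ) ∧ (j : ℕ) ≤ 2 * (k' + 1) then r else 0 with ha3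
  -- basic values
  have ha30 : a3 0 = 0 := by simp [ha3]
  have ha3top : a3 (((n + 1 : ℕ)) : Fin (n + 2)) = 0 := by
    simp only [ha3]
    rw [Fin.val_cast_of_lt (by omega : n + 1 < n + 2)]
    rw [if_neg (by omega)]
  have ha3mid : ∀ v < n, a3 (((v + 1 : ℕ)) : Fin (n + 2)) = r := by
    intro v hv
    simp only [ha3]
    rw [Fin.val_cast_of_lt (by omega : v + 1 < n + 2), if_pos (by omega)]
  -- part 1: membership
  have hmem : monom K n a3 ∈ symbPow K n m := by
    rw [mem_symbPow_iff hn3 m a3]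
    intro i hi
    have hsum : ∑ t ∈ Finset.range (n - 2), a3 (((i + t) % n + 1 : ℕ) : Fin (n + 2))
        = (n - 2) * r := by
      rw [Finset.sum_congr rfl fun t _ =>
        ha3mid _ (Nat.mod_lt _ (show 0 < n by omega))]
      rw [Finset.sum_const, Finset.card_range, smul_eq_mul]
    constructor
    · rw [ha30, hsum, hm']
      have : n - 2 = 2 * k' := by omega
      rw [this]; ring_nf; omega
    · rw [ha3top, hsum, hm']
      have : n - 2 = 2 * k' := by omega
      rw [this]; ring_nf; omega
  -- part 2: the degree
  have hdeg : ∀ a : Fin (n + 2) → ℕ,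
      (∑ i, a i) = a 0 + a (((n + 1 : ℕ)) : Fin (n + 2))
        + ∑ v ∈ Finset.range n, a (((v + 1 : ℕ)) : Fin (n + 2)) := by
    intro a
    have e : ∀ i : Fin (n + 2), a i = a (((i : ℕ) : ℕ) : Fin (n + 2)) := by
      intro i; rw [Fin.cast_val_eq_self]
    rw [Finset.sum_congr rfl fun i _ => e i,
      Fin.sum_univ_eq_sum_range (fun j => a ((j : ℕ) : Fin (n + 2))) (n + 2),
      Finset.sum_range_succ, Finset.sum_range_succ']
    have h0 : ((0 : ℕ) : Fin (n + 2)) = 0 := by simp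
    rw [h0]
    ring
  have hdeg3 : (∑ i, a3 i) = 2 * r * (k' + 1) := by
    rw [hdeg a3, ha30, ha3top,
      Finset.sum_congr rfl fun v hv => ha3mid v (Finset.mem_range.mp hv),
      Finset.sum_const, Finset.card_range, smul_eq_mul]
    ring
  -- part 3: alphaSymb
  have hin : 2 * r * (k' + 1) ∈
      {d | ∃ a : Fin (n + 2) → ℕ, (∑ i, a i) = d ∧ monom K n a ∈ symbPow K n m} :=
    ⟨a3, hdeg3, hmem⟩
  have hlow : ∀ d ∈
      {d | ∃ a : Fin (n + 2) → ℕ, (∑ i, a i) = d ∧ monom K n a ∈ symbPow K n m},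
      2 * r * (k' + 1) ≤ d := by
    rintro d ⟨a, rfl, hmema⟩
    rw [mem_symbPow_iff hn3 m a] at hmema
    set C : ℕ := ∑ v ∈ Finset.range n, a (((v + 1 : ℕ)) : Fin (n + 2)) with hC
    set g : ℕ → ℕ := fun v => a (((v + 1 : ℕ)) : Fin (n + 2)) with hg
    have hwsum : ∑ i ∈ Finset.range n,
        (∑ t ∈ Finset.range (n - 2), a (((i + t) % n + 1 : ℕ) : Fin (n + 2)))
        = (n - 2) * C := by
      have : ∀ i t : ℕ, a (((i + t) % n + 1 : ℕ) : Fin (n + 2)) = g ((i + t) % n) := by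
        intro i t; rfl
      rw [Finset.sum_congr rfl fun i _ => Finset.sum_congr rfl fun t _ => this i t]
      rw [Finset.sum_comm]
      have hinner : ∀ t : ℕ, ∑ i ∈ Finset.range n, g ((i + t) % n) = C := by
        intro t
        rw [sum_range_rot n g t]
        refine Finset.sum_congr rfl fun i hi => ?_
        rw [Nat.mod_eq_of_lt (Finset.mem_range.mp hi)]
      rw [Finset.sum_congr rfl fun t _ => hinner t, Finset.sum_const,
        Finset.card_range, smul_eq_mul]
    have h1 : n * m ≤ n * a 0 + (n - 2) * C := by
      have := Finset.sum_le_sum (s := Finset.range n)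
        (f := fun _ => m)
        (g := fun i => a 0 + ∑ t ∈ Finset.range (n - 2),
          a (((i + t) % n + 1 : ℕ) : Fin (n + 2)))
        (fun i hi => (hmema i (Finset.mem_range.mp hi)).1)
      rwa [Finset.sum_const, Finset.card_range, smul_eq_mul, Finset.sum_add_distrib,
        Finset.sum_const, Finset.card_range, smul_eq_mul, hwsum] at this
    have h2 : n * m ≤ n * a (((n + 1 : ℕ)) : Fin (n + 2)) + (n - 2) * C := by
      have := Finset.sum_le_sum (s := Finset.range n)
        (f := fun _ => m)
        (g := fun i => a (((n + 1 : ℕ)) : Fin (n + 2)) + ∑ t ∈ Finset.range (n - 2),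
          a (((i + t) % n + 1 : ℕ) : Fin (n + 2)))
        (fun i hi => (hmema i (Finset.mem_range.mp hi)).2)
      rwa [Finset.sum_const, Finset.card_range, smul_eq_mul, Finset.sum_add_distrib,
        Finset.sum_const, Finset.card_range, smul_eq_mul, hwsum] at this
    rw [hdeg a, ← hC]
    set A := a 0
    set B := a (((n + 1 : ℕ)) : Fin (n + 2))
    have hne : n = 2 * k' + 2 := by omega
    have hn2 : n - 2 = 2 * k' := by omega
    rw [hne] at h1 h2
    have hsub : 2 * k' + 2 - 2 = 2 * k' := by omega
    rw [hsub, hm'] at h1 h2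
    have key : (4 * k') * (2 * r * (k' + 1)) ≤ (4 * k') * (A + B + C) := by nlinarith
    exact Nat.le_of_mul_le_mul_left key (by omega)
  have halpha : alphaSymb K n m = 2 * r * (k' + 1) := by
    rw [alphaSymb]
    exact le_antisymm (Nat.sInf_le hin) (le_csInf ⟨_, hin⟩ hlow)
  -- parts 4,5: distinctness
  have hone : (((1 : ℕ)) : Fin (n + 2)) = (1 : Fin (n + 2)) := by norm_num
  have hval1 : (((1 : Fin (n + 2)) : ℕ)) = 1 := by
    rw [← hone, Fin.val_cast_of_lt (by omega : 1 < n + 2)]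
  refine ⟨hmem, ?_, halpha, ?_, ?_⟩
  · rw [← hdeg3]
  · intro h
    have := monom_exponent_eq _ _ h (1 : Fin (n + 2))
    simp only [ha3, hval1] at this
    split_ifs at this <;> omega
  · intro h
    have := monom_exponent_eq _ _ h (1 : Fin (n + 2))
    simp only [ha3, hval1] at this
    split_ifs at this <;> omega
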